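/- Let u = u_K be a solution of the ODE with u(0) = 1, u'(0⁺) = 0, and suppose u(t) > 0 for all t ≥ 0 and u'(t) ≤ 0 for all t > 0 (case (a)). Then lim_{t→∞} u(t) = 0. -/

import Mathlib

open Real Filter Topology Set

noncomputable section

/-- `u` is a solution of the ODE `u'' + ((n−1)/t)·u' + (C·φ(t) − K)·u = 0` on `(0,∞)`,
continuous on `[0,∞)`, C² on `(0,∞)`, with `u(0) = 1` and `u'(t) → 0` as `t → 0⁺`. -/
def ODESol (n : ℕ) (C K : ℝ) (φ u : ℝ → ℝ) : Prop :=
  ContinuousOn u (Ici 0) ∧ ContDiffOn ℝ 2 u (Ioi 0) ∧ u 0 = 1 ∧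
  Tendsto (deriv u) (𝓝[>] (0 : ℝ)) (𝓝 0) ∧
  ∀ t : ℝ, 0 < t →
    deriv (deriv u) t + (((n : ℝ) - 1) / t) * deriv u t + (C * φ t - K) * u t = 0

/-- Hypotheses on the potential `φ`: C¹ on `[0,∞)`, positive on `[0,∞)`,
with `φ' < 0` on `(0,∞)`, and `φ(t) → 0` as `t → ∞`. -/
def PhiHyp (φ : ℝ → ℝ) : Prop :=
  ContDiffOn ℝ 1 φ (Ici 0) ∧ (∀ t : ℝ, 0 ≤ t → 0 < φ t) ∧
  (∀ t : ℝ, 0 < t → deriv φ t < 0) ∧ Tendsto φ atTop (𝓝 0)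

/-- decay in case (a).
If `u = u_K` solves the ODE with `u(0) = 1`, `u'(0⁺) = 0`, stays positive on `[0,∞)` and
has `u' ≤ 0` on `(0,∞)`, then `u(t) → 0` as `t → ∞`. -/
theorem ODE_case_a_decay {n : ℕ} (hn : 2 ≤ n) (C K : ℝ) (hC : 0 < C) (hK : 0 < K)
    (φ : ℝ → ℝ) (hφ : PhiHyp φ)
    (u : ℝ → ℝ) (hu : ODESol n C K φ u)
    (hpos : ∀ t : ℝ, 0 ≤ t → 0 < u t)
    (hdec : ∀ t : ℝ, 0 < t → deriv u t ≤ 0) :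
    Tendsto u atTop (𝓝 0) := by
  obtain ⟨hcont, hC2, hu0, hd0, hode⟩ := hu
  obtain ⟨hφ1, hφpos, hφ', hφ0⟩ := hφ
  have hud : DifferentiableOn ℝ u (Ioi 0) := hC2.differentiableOn (by norm_num)
  have hd1 : ContDiffOn ℝ 1 (deriv u) (Ioi 0) :=
    hC2.deriv_of_isOpen isOpen_Ioi (by norm_num)
  have hdd : ∀ t : ℝ, 0 < t → DifferentiableAt ℝ (deriv u) t := fun t ht =>
    (hd1.differentiableOn one_ne_zero).differentiableAt (isOpen_Ioi.mem_nhds ht)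
  have hanti : AntitoneOn u (Ici 0) := by
    apply antitoneOn_of_deriv_nonpos (convex_Ici 0) hcont
    · rw [interior_Ici]; exact hud
    · rw [interior_Ici]; exact fun t ht => hdec t ht
  set L := sInf (u '' Ici 0) with hLdef
  have hne : (u '' Ici 0).Nonempty := ⟨u 0, mem_image_of_mem u self_mem_Ici⟩
  have hbdd : BddBelow (u '' Ici 0) := by
    refine ⟨0, ?_⟩
    rintro x ⟨t, ht, rfl⟩
    exact (hpos t ht).le
  have hL0 : 0 ≤ L := by
    apply le_csInf hne
    rintro x ⟨t, ht, rfl⟩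
    exact (hpos t ht).le
  have hLle : ∀ t : ℝ, 0 ≤ t → L ≤ u t := fun t ht =>
    csInf_le hbdd (mem_image_of_mem u ht)
  have htend : Tendsto u atTop (𝓝 L) := by
    rw [Metric.tendsto_atTop]
    intro ε hε
    obtain ⟨x, hxmem, hx⟩ := exists_lt_of_csInf_lt hne (lt_add_of_pos_right L hε)
    obtain ⟨t0, ht0, rfl⟩ := hxmem
    refine ⟨max t0 1, fun t ht => ?_⟩
    have ht0' : (0:ℝ) ≤ t := le_trans (le_trans zero_le_one (le_max_right _ _)) ht
    have h1 : L ≤ u t := hLle t ht0'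
    have h2 : u t ≤ u t0 := hanti ht0 ht0' (le_trans (le_max_left _ _) ht)
    rw [Real.dist_eq, abs_lt]
    constructor <;> linarith
  suffices hLz : L = 0 by rwa [hLz] at htend
  by_contra hLne
  have hLpos : 0 < L := lt_of_le_of_ne hL0 (Ne.symm hLne)
  have hev : ∀ᶠ t in atTop, φ t < K / (2 * C) :=
    hφ0.eventually (gt_mem_nhds (by positivity))
  obtain ⟨T0, hT0⟩ := eventually_atTop.1 hev
  set T := max T0 1 with hTdef
  have hT1 : (1:ℝ) ≤ T := le_max_right _ _
  have hTpos : (0:ℝ) < T := lt_of_lt_of_le one_pos hT1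
  set c := K / 2 * L with hcdef
  have hcpos : 0 < c := by positivity
  -- second derivative bound
  have hdd2 : ∀ t : ℝ, T ≤ t → c ≤ deriv (deriv u) t := by
    intro t ht
    have htpos : 0 < t := lt_of_lt_of_le hTpos ht
    have hφt : φ t < K / (2 * C) := hT0 t (le_trans (le_max_left _ _) ht)
    have hCφ : C * φ t ≤ K / 2 := by
      rw [div_mul_eq_div_div] at hφt
      have := (lt_div_iff₀ hC).1 hφt
      linarith [this]
    have hut : L ≤ u t := hLle t htpos.le
    have hut' : deriv u t ≤ 0 := hdec t htpos
    have hfrac : 0 ≤ ((n : ℝ) - 1) / t := by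
      apply div_nonneg _ htpos.le
      have : (2:ℝ) ≤ (n:ℝ) := by exact_mod_cast hn
      linarith
    have heq := hode t htpos
    have h1 : (C * φ t - K) * u t ≤ -(K / 2) * u t := by
      apply mul_le_mul_of_nonneg_right _ (hpos t htpos.le).le
      linarith
    have h2 : -(K / 2) * u t ≤ -(K / 2) * L := by
      apply mul_le_mul_of_nonpos_left hut
      linarith
    nlinarith [mul_nonneg hfrac (neg_nonneg.2 hut')]
  -- g := deriv u - c * t is monotone on [T, ∞)
  have hsub : Ici T ⊆ Ioi (0:ℝ) := fun x hx => lt_of_lt_of_le hTpos hx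
  have hg : MonotoneOn (fun s => deriv u s - c * s) (Ici T) := by
    apply monotoneOn_of_deriv_nonneg (convex_Ici T)
    · exact ((hd1.continuousOn.mono hsub).sub
        ((continuous_const.mul continuous_id).continuousOn))
    · rw [interior_Ici]
      intro s hs
      have hspos : 0 < s := lt_trans hTpos hs
      exact (((hdd s hspos).sub ((differentiableAt_id.const_mul c))).differentiableWithinAt)
    · rw [interior_Ici]
      intro s hs
      have hspos : 0 < s := lt_trans hTpos hs
      have hder : deriv (fun x => deriv u x - c * x) s = deriv (deriv u) s - c := by
        have h := ((hdd s hspos).hasDerivAt.sub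
          ((hasDerivAt_id s).const_mul c)).deriv
        rw [show (fun x => deriv u x - c * x) = (deriv u - fun y => c * y) from rfl]
        simpa using h
      rw [hder]
      have := hdd2 s hs.le
      linarith
  -- contradiction
  set t1 := T + (1 - deriv u T) / c with ht1def
  have hduT : deriv u T ≤ 0 := hdec T hTpos
  have hq : 0 ≤ (1 - deriv u T) / c := div_nonneg (by linarith) hcpos.le
  have ht1ge : T ≤ t1 := by rw [ht1def]; linarith
  have hkey := hg self_mem_Ici (mem_Ici.2 ht1ge) ht1ge
  have hct : c * (t1 - T) = 1 - deriv u T := by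
    rw [ht1def]
    field_simp
    ring
  have ht1pos : 0 < t1 := lt_of_lt_of_le hTpos ht1ge
  have := hdec t1 ht1pos
  simp only at hkey
  nlinarith
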